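/- Let Θ be a random angle with Kato–Jones density g_KJ(·; μ, γ, λ, ρ). Then for every positive integer p, the p-th trigonometric moment is E(e^{ipΘ}) = ∫_{−π}^{π} e^{ipθ} g_KJ(θ; μ, γ, λ, ρ) dθ = γ (ρ e^{iλ})^{−1} (ρ e^{i(μ+λ)})^p = γ ρ^{p−1} e^{i(pμ + (p−1)λ)} (with the convention ρ⁰ = 1 when ρ = 0). -/

import Mathlib

/-- The Kato–Jones density. -/
noncomputable def gKJ (μ γ lam ρ θ : ℝ) : ℝ :=
  (1 / (2 * Real.pi)) *
    (1 + 2 * γ * (Real.cos (θ - μ) - ρ * Real.cos lam) /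
      (1 + ρ ^ 2 - 2 * ρ * Real.cos (θ - μ - lam)))

open Complex intervalIntegral

private lemma norm_exp_I_mul (t : ℝ) : ‖Complex.exp (Complex.I * t)‖ = 1 := by
  simp [Complex.norm_exp]

private lemma norm_exp_neg_I_mul (t : ℝ) : ‖Complex.exp (-(Complex.I * t))‖ = 1 := by
  simp [Complex.norm_exp]

private lemma one_sub_ne (c e : ℂ) (hc : ‖c‖ < 1) (he : ‖e‖ = 1) : 1 - c * e ≠ 0 := by
  intro h
  rw [sub_eq_zero] at h
  have h2 : ‖(1:ℂ)‖ = ‖c * e‖ := by rw [h]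
  rw [norm_mul, he, mul_one, norm_one] at h2
  linarith

private lemma norm_one_sub_ge (c e : ℂ) (he : ‖e‖ = 1) : 1 - ‖c‖ ≤ ‖1 - c * e‖ := by
  calc 1 - ‖c‖ = ‖(1:ℂ)‖ - ‖c * e‖ := by rw [norm_one, norm_mul, he, mul_one]
    _ ≤ _ := norm_sub_norm_le _ _

private lemma exp_I_cont (n : ℕ) :
    Continuous fun θ : ℝ => Complex.exp (Complex.I * n * θ) :=
  Complex.continuous_exp.comp (by continuity)

private lemma integral_exp_nat (m : ℕ) (hm : 1 ≤ m) :
    ∫ θ in (-Real.pi)..Real.pi, Complex.exp (Complex.I * m * θ) = 0 := by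
  have hm0 : (Complex.I * m) ≠ 0 := by
    have : (m:ℂ) ≠ 0 := Nat.cast_ne_zero.mpr (by omega)
    exact mul_ne_zero Complex.I_ne_zero this
  have hd : ∀ θ : ℝ, HasDerivAt (fun t : ℝ => Complex.exp (Complex.I * m * t) / (Complex.I * m))
      (Complex.exp (Complex.I * m * θ)) θ := by
    intro θ
    have h1 : HasDerivAt (fun z : ℂ => Complex.exp (Complex.I * m * z) / (Complex.I * m))
        (Complex.exp (Complex.I * m * θ)) (θ : ℂ) := by
      have h0 := (((hasDerivAt_id (θ:ℂ)).const_mul (Complex.I * m)).cexp).div_const (Complex.I * m)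
      simpa [mul_div_cancel_right₀ _ hm0] using h0
    exact h1.comp_ofReal
  rw [intervalIntegral.integral_eq_sub_of_hasDerivAt (fun θ _ => hd θ)
    ((exp_I_cont m).intervalIntegrable _ _)]
  have h1 : Complex.exp (Complex.I * m * (Real.pi : ℂ)) = (-1) ^ m := by
    rw [show Complex.I * m * (Real.pi : ℂ) = m * (Real.pi * Complex.I) by ring,
      Complex.exp_nat_mul, Complex.exp_pi_mul_I]
  have h2 : Complex.exp (Complex.I * m * ((-Real.pi : ℝ) : ℂ)) = (-1) ^ m := by
    push_cast
    rw [show Complex.I * m * (-(Real.pi : ℂ)) = m * (-(Real.pi * Complex.I)) by ring,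
      Complex.exp_nat_mul, Complex.exp_neg, Complex.exp_pi_mul_I]
    rw [inv_neg, inv_one]
  rw [h1]
  rw [show ((-Real.pi : ℝ) : ℂ) = ((-Real.pi : ℝ) : ℂ) from rfl] at h2
  push_cast at h2 ⊢
  rw [h2]
  ring

private lemma denom_cont (c : ℂ) :
    Continuous fun θ : ℝ => 1 - c * Complex.exp (Complex.I * θ) :=
  continuous_const.sub (continuous_const.mul (Complex.continuous_exp.comp (by continuity)))

private lemma ratio_cont (c : ℂ) (hc : ‖c‖ < 1) (n : ℕ) :
    Continuous fun θ : ℝ =>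
      Complex.exp (Complex.I * n * θ) / (1 - c * Complex.exp (Complex.I * θ)) :=
  (exp_I_cont n).div (denom_cont c)
    (fun θ => one_sub_ne c _ hc (norm_exp_I_mul θ))

private lemma norm_exp_I_nat_mul (n : ℕ) (t : ℝ) :
    ‖Complex.exp (Complex.I * n * t)‖ = 1 := by
  simp [Complex.norm_exp]

private lemma intA (c : ℂ) (hc : ‖c‖ < 1) (m : ℕ) (hm : 1 ≤ m) :
    ∫ θ in (-Real.pi)..Real.pi,
      Complex.exp (Complex.I * m * θ) / (1 - c * Complex.exp (Complex.I * θ)) = 0 := by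
  have hne : ∀ θ : ℝ, 1 - c * Complex.exp (Complex.I * θ) ≠ 0 :=
    fun θ => one_sub_ne c _ hc (norm_exp_I_mul θ)
  set J : ℕ → ℂ := fun k => ∫ θ in (-Real.pi)..Real.pi,
    Complex.exp (Complex.I * ((m + k : ℕ) : ℂ) * θ) / (1 - c * Complex.exp (Complex.I * θ))
    with hJ
  have hstep : ∀ k, J k = c * J (k + 1) := by
    intro k
    have hpt : ∀ θ : ℝ,
        Complex.exp (Complex.I * ((m + k : ℕ) : ℂ) * θ) / (1 - c * Complex.exp (Complex.I * θ))
        - c * (Complex.exp (Complex.I * ((m + (k+1) : ℕ) : ℂ) * θ) /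
            (1 - c * Complex.exp (Complex.I * θ)))
        = Complex.exp (Complex.I * ((m + k : ℕ) : ℂ) * θ) := by
      intro θ
      have he : Complex.exp (Complex.I * ((m + (k+1) : ℕ) : ℂ) * θ)
          = Complex.exp (Complex.I * ((m + k : ℕ) : ℂ) * θ) * Complex.exp (Complex.I * θ) := by
        rw [← Complex.exp_add]; congr 1; push_cast; ring
      rw [he, ← mul_div_assoc, div_sub_div_same,
        show Complex.exp (Complex.I * ((m + k : ℕ) : ℂ) * θ)
            - c * (Complex.exp (Complex.I * ((m + k : ℕ) : ℂ) * θ) * Complex.exp (Complex.I * θ))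
          = Complex.exp (Complex.I * ((m + k : ℕ) : ℂ) * θ) * (1 - c * Complex.exp (Complex.I * θ))
          from by ring,
        mul_div_assoc, div_self (hne θ), mul_one]
    have hi1 : IntervalIntegrable (fun θ : ℝ =>
        Complex.exp (Complex.I * ((m + k : ℕ) : ℂ) * θ) / (1 - c * Complex.exp (Complex.I * θ)))
        MeasureTheory.volume (-Real.pi) Real.pi :=
      (ratio_cont c hc (m + k)).intervalIntegrable _ _
    have hi2 : IntervalIntegrable (fun θ : ℝ =>
        Complex.exp (Complex.I * ((m + (k+1) : ℕ) : ℂ) * θ) / (1 - c * Complex.exp (Complex.I * θ)))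
        MeasureTheory.volume (-Real.pi) Real.pi :=
      (ratio_cont c hc (m + (k+1))).intervalIntegrable _ _
    have hsubint := intervalIntegral.integral_sub hi1 (hi2.const_mul c)
    have h0 : J k - c * J (k + 1) = 0 := by
      rw [hJ]
      simp only
      rw [← intervalIntegral.integral_const_mul, ← hsubint,
        intervalIntegral.integral_congr (fun θ _ => hpt θ)]
      exact integral_exp_nat (m + k) (by omega)
    have h1 := sub_eq_zero.mp h0
    exact h1
  have hiter : ∀ k, J 0 = c ^ k * J k := by
    intro k
    induction k with
    | zero => rw [pow_zero, one_mul]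
    | succ n ih => rw [ih, hstep n, pow_succ]; ring
  have hbound : ∀ k, ‖J k‖ ≤ (1 - ‖c‖)⁻¹ * (2 * Real.pi) := by
    intro k
    have hb : ∀ θ ∈ Set.uIoc (-Real.pi) Real.pi,
        ‖Complex.exp (Complex.I * ((m + k : ℕ) : ℂ) * θ) / (1 - c * Complex.exp (Complex.I * θ))‖
          ≤ (1 - ‖c‖)⁻¹ := by
      intro θ _
      rw [norm_div, norm_exp_I_nat_mul]
      have h1 : 0 < 1 - ‖c‖ := by linarith
      have h2 : 1 - ‖c‖ ≤ ‖1 - c * Complex.exp (Complex.I * θ)‖ :=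
        norm_one_sub_ge c _ (norm_exp_I_mul θ)
      rw [← one_div]
      exact one_div_le_one_div_of_le h1 h2
    have := intervalIntegral.norm_integral_le_of_norm_le_const hb
    calc ‖J k‖ ≤ (1 - ‖c‖)⁻¹ * |Real.pi - -Real.pi| := this
      _ = (1 - ‖c‖)⁻¹ * (2 * Real.pi) := by
          rw [abs_of_pos (by linarith [Real.pi_pos] : (0:ℝ) < Real.pi - -Real.pi)]; ring
  have hJ0 : J 0 = 0 := by
    have hto : Filter.Tendsto (fun k => ‖c‖ ^ k * ((1 - ‖c‖)⁻¹ * (2 * Real.pi)))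
        Filter.atTop (nhds 0) := by
      simpa using (tendsto_pow_atTop_nhds_zero_of_lt_one (norm_nonneg c) hc).mul_const
        ((1 - ‖c‖)⁻¹ * (2 * Real.pi))
    have hle : ∀ k, ‖J 0‖ ≤ ‖c‖ ^ k * ((1 - ‖c‖)⁻¹ * (2 * Real.pi)) := by
      intro k
      rw [hiter k, norm_mul, norm_pow]
      exact mul_le_mul_of_nonneg_left (hbound k) (by positivity)
    have : ‖J 0‖ ≤ 0 := ge_of_tendsto' hto hle
    simpa using le_antisymm this (norm_nonneg _)
  have : J 0 = ∫ θ in (-Real.pi)..Real.pi,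
      Complex.exp (Complex.I * m * θ) / (1 - c * Complex.exp (Complex.I * θ)) := by
    rw [hJ]; simp
  rw [← this]; exact hJ0


private lemma denom_cont' (c : ℂ) :
    Continuous fun θ : ℝ => 1 - c * Complex.exp (-(Complex.I * θ)) :=
  continuous_const.sub (continuous_const.mul (Complex.continuous_exp.comp (by continuity)))

private lemma hne' (c : ℂ) (hc : ‖c‖ < 1) (θ : ℝ) :
    1 - c * Complex.exp (-(Complex.I * θ)) ≠ 0 :=
  one_sub_ne c _ hc (norm_exp_neg_I_mul θ)

private lemma ratio_cont' (c : ℂ) (hc : ‖c‖ < 1) (n : ℕ) :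
    Continuous fun θ : ℝ =>
      Complex.exp (Complex.I * n * θ) / (1 - c * Complex.exp (-(Complex.I * θ))) :=
  (exp_I_cont n).div (denom_cont' c) (hne' c hc)

private lemma int_neg_ratio (c : ℂ) (hc : ‖c‖ < 1) :
    ∫ θ in (-Real.pi)..Real.pi,
      Complex.exp (-(Complex.I * θ)) / (1 - c * Complex.exp (-(Complex.I * θ))) = 0 := by
  have hcomp := intervalIntegral.integral_comp_neg (a := -Real.pi) (b := Real.pi)
    (fun x : ℝ => Complex.exp (Complex.I * (1:ℕ) * x) / (1 - c * Complex.exp (Complex.I * x)))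
  rw [neg_neg] at hcomp
  have hcong : ∀ θ ∈ Set.uIcc (-Real.pi) Real.pi,
      Complex.exp (-(Complex.I * θ)) / (1 - c * Complex.exp (-(Complex.I * θ)))
      = Complex.exp (Complex.I * (1:ℕ) * ((-θ : ℝ) : ℂ)) /
          (1 - c * Complex.exp (Complex.I * ((-θ : ℝ) : ℂ))) := by
    intro θ _
    have h1 : Complex.exp (Complex.I * (1:ℕ) * ((-θ : ℝ) : ℂ)) = Complex.exp (-(Complex.I * θ)) := by
      congr 1; push_cast; ring
    have h2 : Complex.exp (Complex.I * ((-θ : ℝ) : ℂ)) = Complex.exp (-(Complex.I * θ)) := by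
      congr 1; push_cast; ring
    rw [h1, h2]
  rw [intervalIntegral.integral_congr hcong]
  rw [hcomp]
  exact intA c hc 1 le_rfl

private lemma intB (c : ℂ) (hc : ‖c‖ < 1) (m : ℕ) :
    ∫ θ in (-Real.pi)..Real.pi,
      Complex.exp (Complex.I * m * θ) / (1 - c * Complex.exp (-(Complex.I * θ)))
      = 2 * Real.pi * c ^ m := by
  induction m with
  | zero =>
    have hpt : ∀ θ ∈ Set.uIcc (-Real.pi) Real.pi,
        Complex.exp (Complex.I * (0:ℕ) * θ) / (1 - c * Complex.exp (-(Complex.I * θ)))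
        = 1 + c * (Complex.exp (-(Complex.I * θ)) / (1 - c * Complex.exp (-(Complex.I * θ)))) := by
      intro θ _
      have h0 : Complex.exp (Complex.I * ((0:ℕ):ℂ) * θ) = 1 := by
        norm_num
      rw [h0]
      field_simp [hne' c hc θ]
      ring
    rw [intervalIntegral.integral_congr hpt]
    have hi1 : IntervalIntegrable (fun _ : ℝ => (1:ℂ)) MeasureTheory.volume (-Real.pi) Real.pi :=
      intervalIntegrable_const
    have hi2 : IntervalIntegrable (fun θ : ℝ =>
        c * (Complex.exp (-(Complex.I * θ)) / (1 - c * Complex.exp (-(Complex.I * θ)))))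
        MeasureTheory.volume (-Real.pi) Real.pi := by
      apply Continuous.intervalIntegrable
      exact continuous_const.mul ((Complex.continuous_exp.comp (by continuity)).div
        (denom_cont' c) (hne' c hc))
    rw [intervalIntegral.integral_add hi1 hi2, intervalIntegral.integral_const_mul,
      int_neg_ratio c hc, intervalIntegral.integral_const]
    push_cast
    simp [Complex.real_smul]
    ring
  | succ n ih =>
    have hpt : ∀ θ ∈ Set.uIcc (-Real.pi) Real.pi,
        Complex.exp (Complex.I * ((n+1:ℕ):ℂ) * θ) / (1 - c * Complex.exp (-(Complex.I * θ)))
        = Complex.exp (Complex.I * ((n+1:ℕ):ℂ) * θ)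
          + c * (Complex.exp (Complex.I * (n:ℕ) * θ) / (1 - c * Complex.exp (-(Complex.I * θ)))) := by
      intro θ _
      have he : Complex.exp (Complex.I * ((n+1:ℕ):ℂ) * θ)
          = Complex.exp (Complex.I * ((n:ℕ):ℂ) * θ) * Complex.exp (Complex.I * θ) := by
        rw [← Complex.exp_add]; congr 1; push_cast; ring
      have hee : Complex.exp (Complex.I * (θ:ℂ)) * Complex.exp (-(Complex.I * θ)) = 1 := by
        rw [← Complex.exp_add]; simp
      push_cast at he
      field_simp [hne' c hc θ]
      push_cast
      rw [he]
      ring_nf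
      linear_combination (Complex.exp (Complex.I * (n:ℂ) * θ) * c) * hee
    rw [intervalIntegral.integral_congr hpt]
    have hi1 : IntervalIntegrable (fun θ : ℝ => Complex.exp (Complex.I * ((n+1:ℕ):ℂ) * θ))
        MeasureTheory.volume (-Real.pi) Real.pi :=
      (exp_I_cont (n+1)).intervalIntegrable _ _
    have hi2 : IntervalIntegrable (fun θ : ℝ =>
        Complex.exp (Complex.I * (n:ℕ) * θ) / (1 - c * Complex.exp (-(Complex.I * θ))))
        MeasureTheory.volume (-Real.pi) Real.pi :=
      (ratio_cont' c hc n).intervalIntegrable _ _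
    rw [intervalIntegral.integral_add hi1 (hi2.const_mul c),
      intervalIntegral.integral_const_mul, integral_exp_nat (n+1) (by omega), ih]
    ring

set_option maxHeartbeats 2000000 in
private lemma pointwise (μ γ lam ρ : ℝ) (hρ0 : 0 ≤ ρ) (hρ1 : ρ < 1) (q : ℕ) (θ : ℝ) :
    Complex.exp (Complex.I * ((q+1:ℕ):ℂ) * θ) * (gKJ μ γ lam ρ θ : ℂ)
    = ((1 / (2*Real.pi) : ℝ) : ℂ) * Complex.exp (Complex.I * ((q+1:ℕ):ℂ) * θ)
    + ((γ / (2*Real.pi) : ℝ) : ℂ) * (Complex.exp (Complex.I * (μ:ℂ)) *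
        (Complex.exp (Complex.I * ((q:ℕ):ℂ) * θ) /
          (1 - ((ρ:ℂ) * Complex.exp (Complex.I * ((μ+lam : ℝ):ℂ))) * Complex.exp (-(Complex.I * (θ:ℂ))))))
    + ((γ / (2*Real.pi) : ℝ) : ℂ) * (Complex.exp (-(Complex.I * (μ:ℂ))) *
        (Complex.exp (Complex.I * ((q+2:ℕ):ℂ) * θ) /
          (1 - ((ρ:ℂ) * Complex.exp (-(Complex.I * ((μ+lam : ℝ):ℂ)))) * Complex.exp (Complex.I * (θ:ℂ))))) := by
  have hπ : ((Real.pi : ℂ)) ≠ 0 := Complex.ofReal_ne_zero.mpr Real.pi_ne_zero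
  set z := Complex.exp (Complex.I * (θ:ℂ)) with hzdef
  set w := Complex.exp (Complex.I * (μ:ℂ)) with hwdef
  set l := Complex.exp (Complex.I * (lam:ℂ)) with hldef
  set u := Complex.exp (Complex.I * ((q:ℕ):ℂ) * θ) with hudef
  have hz : z ≠ 0 := Complex.exp_ne_zero _
  have hw : w ≠ 0 := Complex.exp_ne_zero _
  have hl : l ≠ 0 := Complex.exp_ne_zero _
  have e1 : Complex.exp (Complex.I * ((q+1:ℕ):ℂ) * θ) = u * z := by
    rw [hudef, hzdef, ← Complex.exp_add]; congr 1; push_cast; ring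
  have e2 : Complex.exp (Complex.I * ((q+2:ℕ):ℂ) * θ) = u * z * z := by
    rw [hudef, hzdef, ← Complex.exp_add, ← Complex.exp_add]; congr 1; push_cast; ring
  have e3 : Complex.exp (-(Complex.I * (θ:ℂ))) = z⁻¹ := by
    rw [hzdef, ← Complex.exp_neg]
  have e4 : Complex.exp (Complex.I * ((μ+lam : ℝ):ℂ)) = w * l := by
    rw [hwdef, hldef, ← Complex.exp_add]; congr 1; push_cast; ring
  have e5 : Complex.exp (-(Complex.I * ((μ+lam : ℝ):ℂ))) = (w * l)⁻¹ := by
    rw [Complex.exp_neg, e4]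
  have hcos : ∀ x : ℝ, Complex.cos (x:ℂ) =
      (Complex.exp (Complex.I * x) + (Complex.exp (Complex.I * x))⁻¹) / 2 := by
    intro x
    have h2 := Complex.two_cos (x := (x:ℂ))
    rw [neg_mul] at h2
    rw [← Complex.exp_neg]
    rw [mul_comm (Complex.I) ((x:ℂ))]
    linear_combination h2 / 2
  have f1 : Complex.exp (Complex.I * ((θ:ℂ) - μ)) = z * w⁻¹ := by
    rw [hzdef, hwdef, ← Complex.exp_neg, ← Complex.exp_add]; congr 1; ring
  have c6 : Complex.cos ((θ:ℂ) - (μ:ℂ)) = (z * w⁻¹ + (z * w⁻¹)⁻¹) / 2 := by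
    have h := hcos (θ - μ)
    push_cast at h
    rw [f1] at h
    exact h
  have c7 : Complex.cos ((lam:ℂ)) = (l + l⁻¹) / 2 := hcos lam
  have f2 : Complex.exp (Complex.I * ((θ:ℂ) - μ - lam)) = z * (w*l)⁻¹ := by
    rw [hzdef, hwdef, hldef, mul_inv, ← Complex.exp_neg, ← Complex.exp_neg, ← Complex.exp_add,
      ← Complex.exp_add]
    congr 1; ring
  have c8 : Complex.cos ((θ:ℂ) - (μ:ℂ) - (lam:ℂ)) = (z * (w*l)⁻¹ + ((z * (w*l)⁻¹))⁻¹) / 2 := by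
    have h := hcos (θ - μ - lam)
    push_cast at h
    rw [f2] at h
    exact h
  have hD : (1 + ρ^2 - 2*ρ*Real.cos (θ - μ - lam)) ≠ 0 := by
    have h1 := Real.cos_le_one (θ - μ - lam)
    have h2 := Real.neg_one_le_cos (θ - μ - lam)
    have : 0 < 1 + ρ^2 - 2*ρ*Real.cos (θ - μ - lam) := by nlinarith
    exact this.ne'
  have hd1 : (1:ℂ) - ((ρ:ℂ) * Complex.exp (Complex.I * ((μ+lam : ℝ):ℂ))) * Complex.exp (-(Complex.I * (θ:ℂ))) ≠ 0 := by
    apply one_sub_ne _ _ _ (by simp [Complex.norm_exp])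
    rw [norm_mul]
    simp only [Complex.norm_real, Real.norm_eq_abs]
    rw [_root_.abs_of_nonneg hρ0]
    calc ρ * ‖Complex.exp (Complex.I * ((μ+lam : ℝ):ℂ))‖ = ρ * 1 := by
          congr 1; simp [Complex.norm_exp]
      _ < 1 := by linarith
  have hd2 : (1:ℂ) - ((ρ:ℂ) * Complex.exp (-(Complex.I * ((μ+lam : ℝ):ℂ)))) * Complex.exp (Complex.I * (θ:ℂ)) ≠ 0 := by
    apply one_sub_ne _ _ _ (by simp [Complex.norm_exp])
    rw [norm_mul]
    simp only [Complex.norm_real, Real.norm_eq_abs]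
    rw [_root_.abs_of_nonneg hρ0]
    calc ρ * ‖Complex.exp (-(Complex.I * ((μ+lam : ℝ):ℂ)))‖ = ρ * 1 := by
          congr 1; simp [Complex.norm_exp]
      _ < 1 := by linarith
  have hDc : (1:ℂ) + (ρ:ℂ)^2 - 2*(ρ:ℂ)*((z * (w*l)⁻¹ + ((z * (w*l)⁻¹))⁻¹) / 2) ≠ 0 := by
    have h0 := Complex.ofReal_ne_zero.mpr hD
    push_cast at h0
    rwa [c8] at h0
  have e6 : Complex.exp (-(Complex.I * (μ:ℂ))) = w⁻¹ := by
    rw [hwdef, ← Complex.exp_neg]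
  rw [e3, e4] at hd1
  rw [e5, ← hzdef] at hd2
  have hd1' : z - (ρ:ℂ) * (w*l) ≠ 0 := by
    intro h
    apply hd1
    have hrw : (1:ℂ) - (ρ:ℂ) * (w*l) * z⁻¹ = (z - (ρ:ℂ) * (w*l)) * z⁻¹ := by
      field_simp
    rw [hrw, h, zero_mul]
  have hd2' : w * l - (ρ:ℂ) * z ≠ 0 := by
    intro h
    apply hd2
    have hrw : (1:ℂ) - (ρ:ℂ) * (w*l)⁻¹ * z = (w * l - (ρ:ℂ) * z) * (w*l)⁻¹ := by
      field_simp
    rw [hrw, h, zero_mul]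
  have hfact : (1:ℂ) + (ρ:ℂ)^2 - 2*(ρ:ℂ)*((z*(w*l)⁻¹ + (z*(w*l)⁻¹)⁻¹)/2)
      = (1 - (ρ:ℂ)*(w*l)*z⁻¹) * (1 - (ρ:ℂ)*(w*l)⁻¹*z) := by
    field_simp
    ring
  have hrw1 : (1:ℂ) - (ρ:ℂ) * (w*l) * z⁻¹ = (z - (ρ:ℂ) * (w*l)) * z⁻¹ := by
    field_simp
  have hrw2 : (1:ℂ) - (ρ:ℂ) * (w*l)⁻¹ * z = (w * l - (ρ:ℂ) * z) * (w*l)⁻¹ := by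
    field_simp
  have hq1 : ∀ X : ℂ, X / ((1:ℂ) - (ρ:ℂ) * (w*l) * z⁻¹) = X * z / (z - (ρ:ℂ) * (w*l)) := by
    intro X
    rw [hrw1, div_eq_div_iff (mul_ne_zero hd1' (inv_ne_zero hz)) hd1']
    field_simp
  have hq2 : ∀ X : ℂ, X / ((1:ℂ) - (ρ:ℂ) * (w*l)⁻¹ * z) = X * (w*l) / (w * l - (ρ:ℂ) * z) := by
    intro X
    rw [hrw2, div_eq_div_iff (mul_ne_zero hd2' (inv_ne_zero (mul_ne_zero hw hl))) hd2']
    field_simp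
  have hq3 : ∀ X : ℂ, X / (((1:ℂ) - (ρ:ℂ)*(w*l)*z⁻¹) * ((1:ℂ) - (ρ:ℂ)*(w*l)⁻¹*z))
      = X * (z * (w*l)) / ((z - (ρ:ℂ) * (w*l)) * (w * l - (ρ:ℂ) * z)) := by
    intro X
    rw [hrw1, hrw2, div_eq_div_iff
      (mul_ne_zero (mul_ne_zero hd1' (inv_ne_zero hz))
        (mul_ne_zero hd2' (inv_ne_zero (mul_ne_zero hw hl))))
      (mul_ne_zero hd1' hd2')]
    field_simp
  rw [e1, e2, e3, e4, e5, e6]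
  unfold gKJ
  push_cast
  rw [c6, c7, c8, hfact, hq1, hq2, hq3]
  have hT : 2 * (γ:ℂ) * ((z * w⁻¹ + (z * w⁻¹)⁻¹) / 2 - (ρ:ℂ) * ((l + l⁻¹) / 2)) * (z * (w * l))
      = (γ:ℂ) * (z^2*l + w^2*l - (ρ:ℂ)*z*w*l^2 - (ρ:ℂ)*z*w) := by
    field_simp
    ring
  have hT2 : w⁻¹ * (u * z * z * (w * l) / (w * l - (ρ:ℂ) * z)) = u * (z * z * l) / (w * l - (ρ:ℂ) * z) := by
    rw [mul_div_assoc']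
    congr 1
    field_simp
  have hPF : (γ:ℂ) * (z^2*l + w^2*l - (ρ:ℂ)*z*w*l^2 - (ρ:ℂ)*z*w)
        / ((z - (ρ:ℂ) * (w * l)) * (w * l - (ρ:ℂ) * z))
      = (γ:ℂ) * (w / (z - (ρ:ℂ) * (w * l)) + z * l / (w * l - (ρ:ℂ) * z)) := by
    rw [div_add_div _ _ hd1' hd2', mul_div_assoc]
    congr 2
    ring
  rw [hT, hT2, hPF]
  ring


/-- The `p`-th trigonometric moment of the Kato–Jones distribution equals
`γ ρ^{p−1} e^{i(pμ + (p−1)λ)}`. -/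
theorem kato_jones_trig_moment
    (μ γ lam ρ : ℝ)
    (hμ : μ ∈ Set.Ico (-Real.pi) Real.pi)
    (hγ : γ ∈ Set.Ico (0 : ℝ) 1)
    (hρ : ρ ∈ Set.Ico (0 : ℝ) 1)
    (hlam : lam ∈ Set.Ico (-Real.pi) Real.pi)
    (hconstraint : (ρ * Real.cos lam - γ) ^ 2 + (ρ * Real.sin lam) ^ 2 ≤ (1 - γ) ^ 2)
    (p : ℕ) (hp : 0 < p) :
    (∫ θ in (-Real.pi)..Real.pi,
        Complex.exp (Complex.I * p * θ) * (gKJ μ γ lam ρ θ : ℂ)) =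
      (γ : ℂ) * (ρ : ℂ) ^ (p - 1) *
        Complex.exp (Complex.I * ((p : ℂ) * (μ : ℂ) + ((p : ℂ) - 1) * (lam : ℂ))) := by
  obtain ⟨q, rfl⟩ : ∃ q, p = q + 1 := ⟨p - 1, by omega⟩
  obtain ⟨hρ0, hρ1⟩ := hρ
  have hc1 : ‖(ρ:ℂ) * Complex.exp (Complex.I * ((μ + lam : ℝ):ℂ))‖ < 1 := by
    rw [norm_mul, norm_exp_I_mul, mul_one, Complex.norm_real, Real.norm_eq_abs,
      _root_.abs_of_nonneg hρ0]
    exact hρ1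
  have hc2 : ‖(ρ:ℂ) * Complex.exp (-(Complex.I * ((μ + lam : ℝ):ℂ)))‖ < 1 := by
    rw [norm_mul, norm_exp_neg_I_mul, mul_one, Complex.norm_real, Real.norm_eq_abs,
      _root_.abs_of_nonneg hρ0]
    exact hρ1
  have hcong : ∀ θ ∈ Set.uIcc (-Real.pi) Real.pi,
      Complex.exp (Complex.I * ((q+1:ℕ):ℂ) * θ) * (gKJ μ γ lam ρ θ : ℂ)
      = ((1 / (2*Real.pi) : ℝ) : ℂ) * Complex.exp (Complex.I * ((q+1:ℕ):ℂ) * θ)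
        + ((γ / (2*Real.pi) : ℝ) : ℂ) * (Complex.exp (Complex.I * (μ:ℂ)) *
            (Complex.exp (Complex.I * ((q:ℕ):ℂ) * θ) /
              (1 - ((ρ:ℂ) * Complex.exp (Complex.I * ((μ + lam : ℝ):ℂ))) * Complex.exp (-(Complex.I * (θ:ℂ))))))
        + ((γ / (2*Real.pi) : ℝ) : ℂ) * (Complex.exp (-(Complex.I * (μ:ℂ))) *
            (Complex.exp (Complex.I * ((q+2:ℕ):ℂ) * θ) /
              (1 - ((ρ:ℂ) * Complex.exp (-(Complex.I * ((μ + lam : ℝ):ℂ)))) * Complex.exp (Complex.I * (θ:ℂ))))) :=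
    fun θ _ => pointwise μ γ lam ρ hρ0 hρ1 q θ
  rw [intervalIntegral.integral_congr hcong]
  have hi1 : IntervalIntegrable (fun θ : ℝ =>
      ((1 / (2*Real.pi) : ℝ) : ℂ) * Complex.exp (Complex.I * ((q+1:ℕ):ℂ) * θ))
      MeasureTheory.volume (-Real.pi) Real.pi :=
    (continuous_const.mul (exp_I_cont (q+1))).intervalIntegrable _ _
  have hi2 : IntervalIntegrable (fun θ : ℝ =>
      ((γ / (2*Real.pi) : ℝ) : ℂ) * (Complex.exp (Complex.I * (μ:ℂ)) *
        (Complex.exp (Complex.I * ((q:ℕ):ℂ) * θ) /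
          (1 - ((ρ:ℂ) * Complex.exp (Complex.I * ((μ + lam : ℝ):ℂ))) * Complex.exp (-(Complex.I * (θ:ℂ)))))))
      MeasureTheory.volume (-Real.pi) Real.pi :=
    (continuous_const.mul (continuous_const.mul (ratio_cont' _ hc1 q))).intervalIntegrable _ _
  have hi3 : IntervalIntegrable (fun θ : ℝ =>
      ((γ / (2*Real.pi) : ℝ) : ℂ) * (Complex.exp (-(Complex.I * (μ:ℂ))) *
        (Complex.exp (Complex.I * ((q+2:ℕ):ℂ) * θ) /
          (1 - ((ρ:ℂ) * Complex.exp (-(Complex.I * ((μ + lam : ℝ):ℂ)))) * Complex.exp (Complex.I * (θ:ℂ))))))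
      MeasureTheory.volume (-Real.pi) Real.pi :=
    (continuous_const.mul (continuous_const.mul (ratio_cont _ hc2 (q+2)))).intervalIntegrable _ _
  rw [intervalIntegral.integral_add (hi1.add hi2) hi3, intervalIntegral.integral_add hi1 hi2]
  rw [intervalIntegral.integral_const_mul, integral_exp_nat (q+1) (by omega), mul_zero]
  rw [intervalIntegral.integral_const_mul, intervalIntegral.integral_const_mul,
    intervalIntegral.integral_const_mul, intervalIntegral.integral_const_mul,
    intA _ hc2 (q+2) (by omega), intB _ hc1 q, mul_zero, mul_zero]
  have hexp : Complex.exp (Complex.I * ((μ:ℝ):ℂ)) *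
        Complex.exp (Complex.I * ((μ + lam : ℝ):ℂ)) ^ q
      = Complex.exp (Complex.I * ((((q+1:ℕ)):ℂ) * (μ:ℂ) + ((((q+1:ℕ)):ℂ) - 1) * (lam:ℂ))) := by
    rw [← Complex.exp_nat_mul, ← Complex.exp_add]
    congr 1
    push_cast
    ring
  have hπ : (Real.pi : ℂ) ≠ 0 := Complex.ofReal_ne_zero.mpr Real.pi_ne_zero
  rw [mul_pow, show q + 1 - 1 = q from rfl, ← hexp]
  push_cast
  field_simp
  ring
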